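/- There exists an absolute constant C_u > 0 with the following property: for every γ_min > 0 and every sequence (λ_n)_{n≥1} of nonnegative real numbers with √λ_{n+1} − √λ_n ≥ γ_min for all n ≥ 1, for every m ≥ 1 the infinite product F_m(z) := ∏_{k≥1, k≠m} (1 − ((iz − λ_m)/(λ_k − λ_m))²) converges locally uniformly on ℂ, defines an entire function with F_m(−i λ_n) = δ_{mn} for all m, n ≥ 1, and satisfies |F_m(z)| ≤ e^{(C_u/γ_min)√λ_m} · e^{(C_u/γ_min)√|z|} for all z ∈ ℂ. -/

import Mathlib

open Finset Real Filter Topology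

lemma aux_norm_prod_one_add {ι : Type*} (S : Finset ι) (a : ι → ℂ) :
    ‖∏ k ∈ S, (1 + a k)‖ ≤ ∏ k ∈ S, (1 + ‖a k‖) := by
  rw [norm_prod]
  exact Finset.prod_le_prod (fun i _ => norm_nonneg _)
    (fun i _ => (norm_add_le _ _).trans (by simp))

lemma aux_norm_prod_sub_one {ι : Type*} (S : Finset ι) (a : ι → ℂ) :
    ‖(∏ k ∈ S, (1 + a k)) - 1‖ ≤ (∏ k ∈ S, (1 + ‖a k‖)) - 1 := by
  classical
  induction S using Finset.induction_on with
  | empty => simp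
  | insert _ _ hiS ih =>
    rename_i i S
    rw [Finset.prod_insert hiS, Finset.prod_insert hiS]
    have h1 : (1 + a i) * ∏ k ∈ S, (1 + a k) - 1
        = ((∏ k ∈ S, (1 + a k)) - 1) + a i * ∏ k ∈ S, (1 + a k) := by ring
    rw [h1]
    have h2 : ‖a i * ∏ k ∈ S, (1 + a k)‖ ≤ ‖a i‖ * ∏ k ∈ S, (1 + ‖a k‖) := by
      rw [norm_mul]
      exact mul_le_mul_of_nonneg_left (aux_norm_prod_one_add S a) (norm_nonneg _)
    calc ‖((∏ k ∈ S, (1 + a k)) - 1) + a i * ∏ k ∈ S, (1 + a k)‖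
        ≤ ‖(∏ k ∈ S, (1 + a k)) - 1‖ + ‖a i * ∏ k ∈ S, (1 + a k)‖ := norm_add_le _ _
      _ ≤ ((∏ k ∈ S, (1 + ‖a k‖)) - 1) + ‖a i‖ * ∏ k ∈ S, (1 + ‖a k‖) := add_le_add ih h2
      _ = (1 + ‖a i‖) * ∏ k ∈ S, (1 + ‖a k‖) - 1 := by ring

lemma aux_prod_le_exp {ι : Type*} (S : Finset ι) (x : ι → ℝ) (hx : ∀ i ∈ S, 0 ≤ x i) :
    ∏ i ∈ S, (1 + x i) ≤ Real.exp (∑ i ∈ S, x i) := by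
  rw [Real.exp_sum]
  exact Finset.prod_le_prod (fun i hi => by linarith [hx i hi])
    (fun i hi => by linarith [Real.add_one_le_exp (x i)])

lemma aux_sum_inv_sq (n : ℕ) (hn : 1 ≤ n) (M : ℕ) :
    ∑ j ∈ Finset.Ioc n M, (1 / (j:ℝ)^2) ≤ 1 / (n:ℝ) := by
  have key : ∀ M, n ≤ M → ∑ j ∈ Finset.Ioc n M, (1 / (j:ℝ)^2) ≤ 1/(n:ℝ) - 1/(M:ℝ) := by
    intro M hM
    induction M, hM using Nat.le_induction with
    | base => simp
    | succ M hM ih =>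
      rw [← Finset.Icc_add_one_left_eq_Ioc, Finset.sum_Icc_succ_top (by omega), Finset.Icc_add_one_left_eq_Ioc]
      have hM1 : (1:ℝ) ≤ M := by exact_mod_cast hn.trans hM
      have heq : 1/(M:ℝ) - 1/((M:ℝ)+1) = 1/((M:ℝ)*((M:ℝ)+1)) := by
        field_simp
        ring
      have h2 : (1:ℝ) / ((M:ℝ)+1)^2 ≤ 1/(M:ℝ) - 1/((M:ℝ)+1) := by
        rw [heq]
        apply one_div_le_one_div_of_le (by positivity)
        nlinarith
      push_cast
      linarith
  rcases le_or_gt n M with h | h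
  · have hM1 : (1:ℝ) ≤ M := by exact_mod_cast hn.trans h
    have h3 : (0:ℝ) < 1/(M:ℝ) := by positivity
    linarith [key M h]
  · rw [Finset.Ioc_eq_empty (by omega)]
    simp only [Finset.sum_empty]
    positivity


lemma aux_prod_Ioc_fact (m : ℕ) : ∏ j ∈ Finset.Ioc 0 m, j = m.factorial := by
  rw [← Finset.Ico_add_one_add_one_eq_Ioc, zero_add, Finset.prod_Ico_id_eq_factorial]

lemma aux_binom (n : ℕ) : ∏ j ∈ Finset.Ioc 0 n, (1 + (n:ℝ)/j) ≤ 4^n := by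
  have hX : (∏ j ∈ Finset.Ioc 0 n, (n + j)) = Nat.choose (2*n) n * n.factorial := by
    have h1 : (∏ j ∈ Finset.Ioc 0 n, j) * (∏ j ∈ Finset.Ioc n (2*n), j)
        = ∏ j ∈ Finset.Ioc 0 (2*n), j :=
      Finset.prod_Ioc_consecutive _ (Nat.zero_le n) (by omega)
    have h2 : (∏ j ∈ Finset.Ioc n (2*n), j) = ∏ j ∈ Finset.Ioc 0 n, (n + j) := by
      rw [show Finset.Ioc n (2*n) = Finset.map (addLeftEmbedding n) (Finset.Ioc 0 n) by
        rw [Finset.map_add_left_Ioc]; congr 1 <;> omega]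
      rw [Finset.prod_map]
      rfl
    have h3 := Nat.choose_mul_factorial_mul_factorial (show n ≤ 2*n by omega)
    rw [aux_prod_Ioc_fact, h2] at h1
    have h4 : 2*n - n = n := by omega
    rw [h4] at h3
    rw [aux_prod_Ioc_fact] at h1
    have h5 : n.factorial * (∏ j ∈ Finset.Ioc 0 n, (n + j)) = n.factorial * ((2*n).choose n * n.factorial) := by
      rw [h1, ← h3]; ring
    exact Nat.eq_of_mul_eq_mul_left (Nat.factorial_pos n) h5
  have hch : Nat.choose (2*n) n ≤ 4^n := by
    calc Nat.choose (2*n) n ≤ ∑ i ∈ Finset.range (2*n+1), (2*n).choose i :=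
          Finset.single_le_sum (fun i _ => Nat.zero_le _) (by simp [Finset.mem_range]; omega)
      _ = 2^(2*n) := Nat.sum_range_choose (2*n)
      _ = 4^n := by rw [pow_mul]; norm_num
  have heq : ∏ j ∈ Finset.Ioc 0 n, (1 + (n:ℝ)/j)
      = (∏ j ∈ Finset.Ioc 0 n, ((n:ℝ) + j)) / (∏ j ∈ Finset.Ioc 0 n, (j:ℝ)) := by
    rw [← Finset.prod_div_distrib]
    apply Finset.prod_congr rfl
    intro j hj
    have hj1 : 1 ≤ j := (Finset.mem_Ioc.mp hj).1
    have : (j:ℝ) ≠ 0 := by positivity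
    field_simp
    ring
  rw [heq]
  have hc1 : (∏ j ∈ Finset.Ioc 0 n, ((n:ℝ) + j)) = ((Nat.choose (2*n) n * n.factorial : ℕ) : ℝ) := by
    rw [← hX]
    push_cast [Nat.cast_prod]
    rfl
  have hc2 : (∏ j ∈ Finset.Ioc 0 n, (j:ℝ)) = (n.factorial : ℝ) := by
    rw [← Nat.cast_prod, aux_prod_Ioc_fact]
  rw [hc1, hc2]
  push_cast
  rw [mul_div_assoc, div_self (by positivity), mul_one]
  exact_mod_cast hch



lemma aux_sum_inv_sq' (n : ℕ) (hn : 1 ≤ n) (M : ℕ) (s : ℝ) (hs : 0 ≤ s) :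
    ∑ j ∈ Finset.Ioc n M, (s^2 / (j:ℝ)^2) ≤ s^2 / (n:ℝ) := by
  have h1 : ∑ j ∈ Finset.Ioc n M, (s^2 / (j:ℝ)^2) = s^2 * ∑ j ∈ Finset.Ioc n M, (1 / (j:ℝ)^2) := by
    rw [Finset.mul_sum]; apply Finset.sum_congr rfl; intros; ring
  rw [h1, div_eq_mul_one_div (s^2)]
  exact mul_le_mul_of_nonneg_left (aux_sum_inv_sq n hn M) (by positivity)

lemma aux_key (s : ℝ) (hs : 0 ≤ s) (M : ℕ) :
    ∏ j ∈ Finset.Ioc 0 M, (1 + s^2/(j:ℝ)^2) ≤ Real.exp (9*s) := by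
  have hfac : ∀ j ∈ Finset.Ioc 0 M, (0:ℝ) ≤ s^2/(j:ℝ)^2 := by
    intro j hj; positivity
  rcases le_or_gt s 1 with hs1 | hs1
  · -- small s
    calc ∏ j ∈ Finset.Ioc 0 M, (1 + s^2/(j:ℝ)^2)
        ≤ Real.exp (∑ j ∈ Finset.Ioc 0 M, s^2/(j:ℝ)^2) := aux_prod_le_exp _ _ hfac
      _ ≤ Real.exp (9*s) := by
          apply Real.exp_le_exp.mpr
          rcases Nat.eq_zero_or_pos M with hM | hM
          · subst hM; simp; positivity
          · have hsp : (∑ j ∈ Finset.Ioc (0:ℕ) 1, s^2/(j:ℝ)^2) + ∑ j ∈ Finset.Ioc 1 M, s^2/(j:ℝ)^2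
                = ∑ j ∈ Finset.Ioc 0 M, s^2/(j:ℝ)^2 :=
              Finset.sum_Ioc_consecutive _ (by omega) (by omega)
            rw [← hsp]
            have h1 : (∑ j ∈ Finset.Ioc (0:ℕ) 1, s^2/(j:ℝ)^2) = s^2 := by norm_num
            have h2 := aux_sum_inv_sq' 1 le_rfl M s hs
            rw [h1]
            push_cast at h2
            nlinarith
  · -- large s
    set n := Nat.ceil s with hn
    have hn1 : 1 ≤ n := Nat.one_le_ceil_iff.mpr (by linarith)
    have hsn : s ≤ n := Nat.le_ceil s
    have hn2s : (n:ℝ) ≤ 2*s := by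
      have := Nat.ceil_lt_add_one hs
      push_cast at this ⊢
      linarith
    set M' := max M n with hM'
    have hsub : ∏ j ∈ Finset.Ioc 0 M, (1 + s^2/(j:ℝ)^2) ≤ ∏ j ∈ Finset.Ioc 0 M', (1 + s^2/(j:ℝ)^2) := by
      have hcons : (∏ j ∈ Finset.Ioc 0 M, (1 + s^2/(j:ℝ)^2)) * ∏ j ∈ Finset.Ioc M M', (1 + s^2/(j:ℝ)^2)
          = ∏ j ∈ Finset.Ioc 0 M', (1 + s^2/(j:ℝ)^2) :=
        Finset.prod_Ioc_consecutive _ (Nat.zero_le M) (le_max_left _ _)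
      rw [← hcons]
      apply le_mul_of_one_le_right
      · exact Finset.prod_nonneg (fun j hj => by positivity)
      · calc (1:ℝ) = ∏ j ∈ Finset.Ioc M M', (1:ℝ) := by rw [Finset.prod_const_one]
          _ ≤ ∏ j ∈ Finset.Ioc M M', (1 + s^2/(j:ℝ)^2) :=
            Finset.prod_le_prod (fun j hj => by norm_num)
              (fun j hj => by nlinarith [sq_nonneg s, sq_nonneg (j:ℝ), div_nonneg (sq_nonneg s) (sq_nonneg (j:ℝ))])
    have hsplit : (∏ j ∈ Finset.Ioc 0 n, (1 + s^2/(j:ℝ)^2)) * ∏ j ∈ Finset.Ioc n M', (1 + s^2/(j:ℝ)^2)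
        = ∏ j ∈ Finset.Ioc 0 M', (1 + s^2/(j:ℝ)^2) :=
      Finset.prod_Ioc_consecutive _ (by omega) (le_max_right _ _)
    have hA : ∏ j ∈ Finset.Ioc 0 n, (1 + s^2/(j:ℝ)^2) ≤ Real.exp (8*s) := by
      have step1 : ∏ j ∈ Finset.Ioc 0 n, (1 + s^2/(j:ℝ)^2)
          ≤ ∏ j ∈ Finset.Ioc 0 n, (1 + (n:ℝ)/j)^2 := by
        apply Finset.prod_le_prod
        · intro j hj; positivity
        · intro j hj
          have hj1 : 1 ≤ j := (Finset.mem_Ioc.mp hj).1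
          have hjR : (1:ℝ) ≤ (j:ℝ) := by exact_mod_cast hj1
          have h1 : s^2/(j:ℝ)^2 ≤ ((n:ℝ)/j)^2 := by
            rw [div_pow]
            apply div_le_div_of_nonneg_right ?_ (by positivity)
            · nlinarith
          have h2 : (0:ℝ) ≤ (n:ℝ)/j := by positivity
          nlinarith
      have step2 : ∏ j ∈ Finset.Ioc 0 n, (1 + (n:ℝ)/j)^2
          = (∏ j ∈ Finset.Ioc 0 n, (1 + (n:ℝ)/j))^2 := by
        rw [Finset.prod_pow]
      have step3 : (∏ j ∈ Finset.Ioc 0 n, (1 + (n:ℝ)/j))^2 ≤ ((4:ℝ)^n)^2 := by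
        apply pow_le_pow_left₀ ?_ (aux_binom n)
        apply Finset.prod_nonneg
        intro j hj
        have hj1 : 1 ≤ j := (Finset.mem_Ioc.mp hj).1
        positivity
      have step4 : ((4:ℝ)^n)^2 ≤ Real.exp (8*s) := by
        have h4 : (4:ℝ) ≤ Real.exp 2 := by
          have h2 : (2:ℝ) ≤ Real.exp 1 := by linarith [Real.add_one_le_exp 1]
          have : Real.exp 2 = Real.exp 1 * Real.exp 1 := by
            rw [← Real.exp_add]; norm_num
          nlinarith [Real.exp_pos 1]
        calc ((4:ℝ)^n)^2 ≤ ((Real.exp 2)^n)^2 := by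
              apply pow_le_pow_left₀ (by positivity) (pow_le_pow_left₀ (by norm_num) h4 n)
          _ = Real.exp ((n:ℝ)*2) * Real.exp ((n:ℝ)*2) := by
              rw [← Real.exp_nat_mul, sq]
          _ = Real.exp ((n:ℝ)*4) := by
              rw [← Real.exp_add]; congr 1; ring
          _ ≤ Real.exp (8*s) := by
              apply Real.exp_le_exp.mpr; linarith
      linarith
    have hB : ∏ j ∈ Finset.Ioc n M', (1 + s^2/(j:ℝ)^2) ≤ Real.exp s := by
      calc ∏ j ∈ Finset.Ioc n M', (1 + s^2/(j:ℝ)^2)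
          ≤ Real.exp (∑ j ∈ Finset.Ioc n M', s^2/(j:ℝ)^2) :=
            aux_prod_le_exp _ _ (fun j _ => by positivity)
        _ ≤ Real.exp s := by
            apply Real.exp_le_exp.mpr
            have h1 := aux_sum_inv_sq' n hn1 M' s hs
            have h2 : s^2/(n:ℝ) ≤ s := by
              rw [div_le_iff₀ (by positivity : (0:ℝ) < (n:ℝ))]
              nlinarith
            linarith
    have hApos : 0 ≤ ∏ j ∈ Finset.Ioc 0 n, (1 + s^2/(j:ℝ)^2) :=
      Finset.prod_nonneg (fun j hj => by positivity)
    calc ∏ j ∈ Finset.Ioc 0 M, (1 + s^2/(j:ℝ)^2)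
        ≤ ∏ j ∈ Finset.Ioc 0 M', (1 + s^2/(j:ℝ)^2) := hsub
      _ = (∏ j ∈ Finset.Ioc 0 n, (1 + s^2/(j:ℝ)^2)) * ∏ j ∈ Finset.Ioc n M', (1 + s^2/(j:ℝ)^2) := hsplit.symm
      _ ≤ Real.exp (8*s) * Real.exp s := by
          apply mul_le_mul hA hB ?_ (by positivity)
          exact Finset.prod_nonneg (fun j hj => by positivity)
      _ = Real.exp (9*s) := by rw [← Real.exp_add]; ring_nf

lemma aux_key2 (s : ℝ) (hs : 0 ≤ s) (T : Finset ℕ) (M : ℕ) (hT : T ⊆ Finset.Ioc 0 M) :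
    ∏ j ∈ T, (1 + s^2/(j:ℝ)^2) ≤ Real.exp (9*s) := by
  have h1 : ∏ j ∈ T, (1 + s^2/(j:ℝ)^2) ≤ ∏ j ∈ Finset.Ioc 0 M, (1 + s^2/(j:ℝ)^2) := by
    rw [← Finset.prod_sdiff hT]
    apply le_mul_of_one_le_left (Finset.prod_nonneg (fun j hj => by positivity))
    calc (1:ℝ) = ∏ j ∈ Finset.Ioc 0 M \ T, (1:ℝ) := by rw [Finset.prod_const_one]
      _ ≤ _ := Finset.prod_le_prod (fun j hj => by norm_num)
          (fun j hj => by nlinarith [div_nonneg (sq_nonneg s) (sq_nonneg (j:ℝ))])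
  exact h1.trans (aux_key s hs M)

lemma aux_sqrt_add (a b : ℝ) (ha : 0 ≤ a) (hb : 0 ≤ b) :
    Real.sqrt (a + b) ≤ Real.sqrt a + Real.sqrt b := by
  rw [show a + b = Real.sqrt a ^ 2 + Real.sqrt b ^ 2 by rw [Real.sq_sqrt ha, Real.sq_sqrt hb]]
  have h1 : Real.sqrt a ^ 2 + Real.sqrt b ^ 2 ≤ (Real.sqrt a + Real.sqrt b)^2 := by
    nlinarith [Real.sqrt_nonneg a, Real.sqrt_nonneg b]
  calc Real.sqrt (Real.sqrt a ^ 2 + Real.sqrt b ^ 2)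
      ≤ Real.sqrt ((Real.sqrt a + Real.sqrt b)^2) := Real.sqrt_le_sqrt h1
    _ = Real.sqrt a + Real.sqrt b := Real.sqrt_sq (by positivity)

lemma main_bound (γ : ℝ) (hγ : 0 < γ) (lam : ℕ → ℝ) (m : ℕ)
    (hd : ∀ k, 1 ≤ k → k ≠ m → γ^2 * ((k:ℝ)-(m:ℝ))^2 ≤ |lam k - lam m|)
    (S : Finset ℕ) (hS : ∀ k ∈ S, 1 ≤ k ∧ k ≠ m) (r : ℝ) (hr : 0 ≤ r) :
    ∏ k ∈ S, (1 + r / |lam k - lam m|) ≤ Real.exp (18 * (Real.sqrt r / γ)) := by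
  classical
  set s := Real.sqrt r / γ with hs_def
  have hs : 0 ≤ s := by positivity
  have stepA : ∀ k ∈ S, r / |lam k - lam m| ≤ s^2 / (((k:ℝ)-(m:ℝ))^2) := by
    intro k hk
    obtain ⟨hk1, hkm⟩ := hS k hk
    have hx : ((k:ℝ)-(m:ℝ)) ≠ 0 := by
      intro h
      apply hkm
      exact_mod_cast (sub_eq_zero.mp h)
    have hx2 : 0 < ((k:ℝ)-(m:ℝ))^2 := by positivity
    have hgx : 0 < γ^2 * ((k:ℝ)-(m:ℝ))^2 := by positivity
    have hdk := hd k hk1 hkm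
    have h1 : r / |lam k - lam m| ≤ r / (γ^2 * ((k:ℝ)-(m:ℝ))^2) :=
      div_le_div_of_nonneg_left hr hgx hdk
    have h2 : r / (γ^2 * ((k:ℝ)-(m:ℝ))^2) = s^2 / (((k:ℝ)-(m:ℝ))^2) := by
      rw [hs_def, div_pow, Real.sq_sqrt hr]
      field_simp
    linarith
  have stepB : ∏ k ∈ S, (1 + r / |lam k - lam m|)
      ≤ ∏ k ∈ S, (1 + s^2 / (((k:ℝ)-(m:ℝ))^2)) :=
    Finset.prod_le_prod
      (fun k hk => by positivity)
      (fun k hk => by linarith [stepA k hk])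
  -- split into k < m and k > m
  have hsplit : ∏ k ∈ S, (1 + s^2 / (((k:ℝ)-(m:ℝ))^2))
      = (∏ k ∈ S.filter (· < m), (1 + s^2 / (((k:ℝ)-(m:ℝ))^2)))
        * ∏ k ∈ S.filter (fun k => ¬ k < m), (1 + s^2 / (((k:ℝ)-(m:ℝ))^2)) :=
    (Finset.prod_filter_mul_prod_filter_not S _ _).symm
  have hpart1 : ∏ k ∈ S.filter (· < m), (1 + s^2 / (((k:ℝ)-(m:ℝ))^2)) ≤ Real.exp (9*s) := by
    have hcong : ∀ k ∈ S.filter (· < m),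
        (1 + s^2 / (((k:ℝ)-(m:ℝ))^2)) = (1 + s^2 / (((m-k:ℕ):ℝ))^2) := by
      intro k hk
      have hkm : k < m := (Finset.mem_filter.mp hk).2
      have : ((m-k:ℕ):ℝ) = (m:ℝ) - (k:ℝ) := by
        push_cast [Nat.cast_sub hkm.le]; ring
      rw [this]
      ring_nf
    have himg : ∏ j ∈ (S.filter (· < m)).image (fun k => m - k), (1 + s^2/(j:ℝ)^2)
        = ∏ k ∈ S.filter (· < m), (1 + s^2/(((m-k:ℕ):ℝ))^2) :=
      Finset.prod_image
        (by intro x hx y hy hxy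
            have hx' : x < m := (Finset.mem_filter.mp hx).2
            have hy' : y < m := (Finset.mem_filter.mp hy).2
            simp only at hxy
            omega)
    rw [Finset.prod_congr rfl hcong, ← himg]
    apply aux_key2 s hs _ m
    intro j hj
    obtain ⟨k, hk, rfl⟩ := Finset.mem_image.mp hj
    have hkm : k < m := (Finset.mem_filter.mp hk).2
    simp only [Finset.mem_Ioc]
    omega
  have hpart2 : ∏ k ∈ S.filter (fun k => ¬ k < m), (1 + s^2 / (((k:ℝ)-(m:ℝ))^2))
      ≤ Real.exp (9*s) := by
    have hcong : ∀ k ∈ S.filter (fun k => ¬ k < m),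
        (1 + s^2 / (((k:ℝ)-(m:ℝ))^2)) = (1 + s^2 / (((k-m:ℕ):ℝ))^2) := by
      intro k hk
      have hkm : ¬ k < m := (Finset.mem_filter.mp hk).2
      have : ((k-m:ℕ):ℝ) = (k:ℝ) - (m:ℝ) := by
        push_cast [Nat.cast_sub (by omega : m ≤ k)]; ring
      rw [this]
    have himg : ∏ j ∈ (S.filter (fun k => ¬ k < m)).image (fun k => k - m), (1 + s^2/(j:ℝ)^2)
        = ∏ k ∈ S.filter (fun k => ¬ k < m), (1 + s^2/(((k-m:ℕ):ℝ))^2) :=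
      Finset.prod_image
        (by intro x hx y hy hxy
            have hx' : ¬ x < m := (Finset.mem_filter.mp hx).2
            have hy' : ¬ y < m := (Finset.mem_filter.mp hy).2
            have hx1 : x ≠ m := (hS x (Finset.mem_filter.mp hx).1).2
            have hy1 : y ≠ m := (hS y (Finset.mem_filter.mp hy).1).2
            simp only at hxy
            omega)
    rw [Finset.prod_congr rfl hcong, ← himg]
    apply aux_key2 s hs _ (S.sup id)
    intro j hj
    obtain ⟨k, hk, rfl⟩ := Finset.mem_image.mp hj
    have hkm : ¬ k < m := (Finset.mem_filter.mp hk).2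
    have hk1 : k ≠ m := (hS k (Finset.mem_filter.mp hk).1).2
    have hksup : k ≤ S.sup id := Finset.le_sup (f := id) (Finset.mem_filter.mp hk).1
    simp only [Finset.mem_Ioc]
    omega
  calc ∏ k ∈ S, (1 + r / |lam k - lam m|)
      ≤ ∏ k ∈ S, (1 + s^2 / (((k:ℝ)-(m:ℝ))^2)) := stepB
    _ = _ := hsplit
    _ ≤ Real.exp (9*s) * Real.exp (9*s) := by
        apply mul_le_mul hpart1 hpart2 ?_ (Real.exp_nonneg _)
        exact Finset.prod_nonneg (fun k hk => by positivity)
    _ = Real.exp (18*s) := by rw [← Real.exp_add]; ring_nf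

lemma gap_mu (γ : ℝ) (lam : ℕ → ℝ)
    (hgap : ∀ n, 1 ≤ n → γ ≤ Real.sqrt (lam (n+1)) - Real.sqrt (lam n)) :
    ∀ a b : ℕ, 1 ≤ a → a ≤ b → γ * ((b:ℝ) - (a:ℝ)) ≤ Real.sqrt (lam b) - Real.sqrt (lam a) := by
  intro a b ha hab
  induction b, hab using Nat.le_induction with
  | base => simp
  | succ b hb ih =>
    have h1 := hgap b (ha.trans hb)
    push_cast
    push_cast at ih
    linarith

lemma gap_lam (γ : ℝ) (hγ : 0 < γ) (lam : ℕ → ℝ) (hlam0 : ∀ n, 1 ≤ n → 0 ≤ lam n)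
    (hgap : ∀ n, 1 ≤ n → γ ≤ Real.sqrt (lam (n+1)) - Real.sqrt (lam n)) :
    ∀ k m : ℕ, 1 ≤ k → 1 ≤ m → k ≠ m → γ^2 * ((k:ℝ)-(m:ℝ))^2 ≤ |lam k - lam m| := by
  have key : ∀ a b : ℕ, 1 ≤ a → a < b → γ^2 * ((b:ℝ)-(a:ℝ))^2 ≤ lam b - lam a := by
    intro a b ha hab
    have h1 := gap_mu γ lam hgap a b ha hab.le
    have hba : (1:ℝ) ≤ (b:ℝ) - (a:ℝ) := by
      have h : a + 1 ≤ b := hab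
      have h2 := (Nat.cast_le (α := ℝ)).mpr h
      push_cast at h2
      linarith
    have hsa : 0 ≤ Real.sqrt (lam a) := Real.sqrt_nonneg _
    have hsb : 0 ≤ Real.sqrt (lam b) := Real.sqrt_nonneg _
    have hlb : lam b = Real.sqrt (lam b) ^ 2 := (Real.sq_sqrt (hlam0 b (by omega))).symm
    have hla : lam a = Real.sqrt (lam a) ^ 2 := (Real.sq_sqrt (hlam0 a ha)).symm
    have hgb : 0 ≤ γ * ((b:ℝ) - (a:ℝ)) := by positivity
    rw [hlb, hla]
    nlinarith
  intro k m hk hm hkm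
  rcases lt_or_gt_of_ne hkm with h | h
  · have h2 := key k m hk h
    have hnn : (0:ℝ) ≤ γ^2 * ((m:ℝ)-(k:ℝ))^2 := by positivity
    rw [abs_sub_comm, abs_of_nonneg (by linarith)]
    nlinarith
  · have h2 := key m k hm h
    have hnn : (0:ℝ) ≤ γ^2 * ((k:ℝ)-(m:ℝ))^2 := by positivity
    rw [abs_of_nonneg (by linarith)]
    nlinarith

lemma norm_P_le (γ : ℝ) (hγ : 0 < γ) (lam : ℕ → ℝ) (m : ℕ) (h0m : 0 ≤ lam m)
    (hd : ∀ k, 1 ≤ k → k ≠ m → γ^2 * ((k:ℝ)-(m:ℝ))^2 ≤ |lam k - lam m|)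
    (S : Finset ℕ) (hS : ∀ k ∈ S, 1 ≤ k ∧ k ≠ m) (z : ℂ) :
    ∏ k ∈ S, (1 + ‖((Complex.I * z - (lam m:ℂ)) / ((lam k:ℂ) - (lam m:ℂ)))^2‖)
      ≤ Real.exp (36/γ * Real.sqrt (lam m)) * Real.exp (36/γ * Real.sqrt (‖z‖)) := by
  set r := ‖Complex.I * z - (lam m:ℂ)‖ with hr_def
  have hr : 0 ≤ r := norm_nonneg _
  have habs : ∀ k, ‖((Complex.I * z - (lam m:ℂ)) / ((lam k:ℂ) - (lam m:ℂ)))^2‖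
      = (r / |lam k - lam m|)^2 := by
    intro k
    rw [norm_pow, norm_div]
    congr 2
    rw [show (lam k:ℂ) - (lam m:ℂ) = ((lam k - lam m : ℝ) : ℂ) by push_cast; ring]
    exact (Complex.norm_real _).trans (Real.norm_eq_abs _)
  have step1 : ∏ k ∈ S, (1 + ‖((Complex.I * z - (lam m:ℂ)) / ((lam k:ℂ) - (lam m:ℂ)))^2‖)
      ≤ ∏ k ∈ S, (1 + r / |lam k - lam m|)^2 := by
    apply Finset.prod_le_prod
    · intro k hk; positivity
    · intro k hk
      rw [habs k]
      have h1 : 0 ≤ r / |lam k - lam m| := by positivity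
      nlinarith
  have step2 : ∏ k ∈ S, (1 + r / |lam k - lam m|)^2
      = (∏ k ∈ S, (1 + r / |lam k - lam m|))^2 := Finset.prod_pow _ _ _
  have step3 : (∏ k ∈ S, (1 + r / |lam k - lam m|))^2 ≤ Real.exp (18 * (Real.sqrt r / γ))^2 := by
    apply pow_le_pow_left₀ (Finset.prod_nonneg (fun k hk => by positivity))
    exact main_bound γ hγ lam m hd S hS r hr
  have step4 : Real.exp (18 * (Real.sqrt r / γ))^2 = Real.exp (36 * (Real.sqrt r / γ)) := by
    rw [sq, ← Real.exp_add]; congr 1; ring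
  have hrle : r ≤ ‖z‖ + lam m := by
    have h1 : r ≤ ‖Complex.I * z‖ + ‖((lam m : ℝ) : ℂ)‖ := by
      rw [hr_def]
      exact norm_sub_le _ _
    rw [norm_mul, Complex.norm_I, one_mul, Complex.norm_real, Real.norm_eq_abs,
      abs_of_nonneg h0m] at h1
    exact h1
  have hsr : Real.sqrt r ≤ Real.sqrt (lam m) + Real.sqrt (‖z‖) := by
    calc Real.sqrt r ≤ Real.sqrt (‖z‖ + lam m) := Real.sqrt_le_sqrt hrle
      _ ≤ Real.sqrt (‖z‖) + Real.sqrt (lam m) :=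
          aux_sqrt_add _ _ (norm_nonneg _) h0m
      _ = _ := by ring
  have step5 : Real.exp (36 * (Real.sqrt r / γ))
      ≤ Real.exp (36/γ * Real.sqrt (lam m)) * Real.exp (36/γ * Real.sqrt (‖z‖)) := by
    rw [← Real.exp_add]
    apply Real.exp_le_exp.mpr
    have h36 : (0:ℝ) < 36/γ := by positivity
    calc 36 * (Real.sqrt r / γ) = 36/γ * Real.sqrt r := by ring
      _ ≤ 36/γ * (Real.sqrt (lam m) + Real.sqrt (‖z‖)) :=
          mul_le_mul_of_nonneg_left hsr h36.le
      _ = _ := by ring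
  calc _ ≤ _ := step1
    _ = _ := step2
    _ ≤ _ := step3
    _ = _ := step4
    _ ≤ _ := step5

theorem weierstrass_product_growth_one_gap :
    ∃ Cu > (0:ℝ),
      ∀ γ : ℝ, 0 < γ → ∀ lam : ℕ → ℝ,
        (∀ n, 1 ≤ n → 0 ≤ lam n) →
        (∀ n, 1 ≤ n → γ ≤ Real.sqrt (lam (n + 1)) - Real.sqrt (lam n)) →
        ∃ F : ℕ → ℂ → ℂ,
          ∀ m, 1 ≤ m →
            TendstoLocallyUniformly
              (fun (K : ℕ) (z : ℂ) =>
                ∏ k ∈ (Finset.Icc 1 K).erase m,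
                  (1 - ((Complex.I * z - (lam m : ℂ)) /
                    ((lam k : ℂ) - (lam m : ℂ))) ^ 2))
              (F m) Filter.atTop ∧
            Differentiable ℂ (F m) ∧
            (∀ n, 1 ≤ n →
              F m (-Complex.I * (lam n : ℂ)) = if m = n then 1 else 0) ∧
            (∀ z : ℂ, ‖F m z‖ ≤
              Real.exp (Cu / γ * Real.sqrt (lam m)) *
                Real.exp (Cu / γ * Real.sqrt (‖z‖))) := by
  classical
  refine ⟨36, by norm_num, ?_⟩
  intro γ hγ lam hlam0 hgap
  have hdall := gap_lam γ hγ lam hlam0 hgap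
  refine ⟨fun m z => limUnder Filter.atTop
    (fun K => ∏ k ∈ (Finset.Icc 1 K).erase m,
      (1 - ((Complex.I * z - (lam m : ℂ)) / ((lam k : ℂ) - (lam m : ℂ))) ^ 2)), ?_⟩
  intro m hm
  set f : ℕ → ℂ → ℂ := fun k z =>
    (1 - ((Complex.I * z - (lam m : ℂ)) / ((lam k : ℂ) - (lam m : ℂ))) ^ 2) with hf
  set P : ℕ → ℂ → ℂ := fun K z => ∏ k ∈ (Finset.Icc 1 K).erase m, f k z with hPdef
  have hd : ∀ k, 1 ≤ k → k ≠ m → γ^2 * ((k:ℝ)-(m:ℝ))^2 ≤ |lam k - lam m| :=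
    fun k hk hkm => hdall k m hk hm hkm
  have h0m : 0 ≤ lam m := hlam0 m hm
  have hS : ∀ K : ℕ, ∀ k ∈ (Finset.Icc 1 K).erase m, 1 ≤ k ∧ k ≠ m := by
    intro K k hk
    rw [Finset.mem_erase, Finset.mem_Icc] at hk
    exact ⟨hk.2.1, hk.1⟩
  -- the key majorization of each partial product
  have hfactor : ∀ (S : Finset ℕ), (∀ k ∈ S, 1 ≤ k ∧ k ≠ m) → ∀ z : ℂ,
      ‖∏ k ∈ S, f k z‖
        ≤ Real.exp (36/γ * Real.sqrt (lam m)) * Real.exp (36/γ * Real.sqrt (‖z‖)) := by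
    intro S hSS z
    have h1 : ‖∏ k ∈ S, f k z‖ = ∏ k ∈ S, ‖f k z‖ := norm_prod _ _
    have h2 : ∀ k ∈ S, ‖f k z‖
        ≤ 1 + ‖((Complex.I * z - (lam m:ℂ)) / ((lam k:ℂ) - (lam m:ℂ)))^2‖ := by
      intro k _
      rw [hf]
      calc ‖1 - ((Complex.I * z - (lam m:ℂ)) / ((lam k:ℂ) - (lam m:ℂ)))^2‖
          = ‖(1:ℂ) - ((Complex.I * z - (lam m:ℂ)) / ((lam k:ℂ) - (lam m:ℂ)))^2‖ := rfl
        _ ≤ ‖(1:ℂ)‖ + ‖((Complex.I * z - (lam m:ℂ)) / ((lam k:ℂ) - (lam m:ℂ)))^2‖ :=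
            norm_sub_le _ _
        _ = 1 + ‖((Complex.I * z - (lam m:ℂ)) / ((lam k:ℂ) - (lam m:ℂ)))^2‖ := by
            rw [norm_one]
    calc ‖∏ k ∈ S, f k z‖ = ∏ k ∈ S, ‖f k z‖ := h1
      _ ≤ ∏ k ∈ S, (1 + ‖((Complex.I * z - (lam m:ℂ)) / ((lam k:ℂ) - (lam m:ℂ)))^2‖) :=
          Finset.prod_le_prod (fun k _ => norm_nonneg _) h2
      _ ≤ _ := norm_P_le γ hγ lam m h0m hd S hSS z
  have hPbound : ∀ K z, ‖P K z‖
      ≤ Real.exp (36/γ * Real.sqrt (lam m)) * Real.exp (36/γ * Real.sqrt (‖z‖)) :=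
    fun K z => hfactor _ (hS K) z
  -- Cauchy machinery
  have hcauchy : ∀ R : ℝ, UniformCauchySeqOn P Filter.atTop (Metric.closedBall 0 R) := by
    intro R
    set ρ : ℝ := max R 0 + lam m with hρ
    have hρ0 : 0 ≤ ρ := by positivity
    set u : ℕ → ℝ := fun k => ρ^2/γ^4 * (1/(((k:ℝ)-(m:ℝ))^4)) with hu
    have hu0 : ∀ k, 0 ≤ u k := by
      intro k
      apply mul_nonneg (by positivity)
      apply one_div_nonneg.mpr
      positivity
    have husum : Summable u := by
      apply Summable.mul_left
      have h4 : Summable (fun k : ℕ => 1/((k:ℝ))^4) :=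
        summable_one_div_nat_pow.mpr (by norm_num)
      have heq : (fun n : ℕ => 1/((((n + m : ℕ)):ℝ)-(m:ℝ))^4) = fun n : ℕ => 1/((n:ℝ))^4 := by
        funext n
        push_cast
        ring_nf
      exact (summable_nat_add_iff m).mp (by rw [heq]; exact h4)
    have hub : ∀ k, 1 ≤ k → k ≠ m → ∀ z ∈ Metric.closedBall (0:ℂ) R,
        ‖((Complex.I * z - (lam m:ℂ)) / ((lam k:ℂ) - (lam m:ℂ)))^2‖ ≤ u k := by
      intro k hk hkm z hz
      have hzR : ‖z‖ ≤ max R 0 := by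
        have := Metric.mem_closedBall.mp hz
        rw [dist_zero_right] at this
        exact le_trans this (le_max_left _ _)
      have hrρ : ‖Complex.I * z - (lam m:ℂ)‖ ≤ ρ := by
        have h1 : ‖Complex.I * z - (lam m:ℂ)‖ ≤ ‖Complex.I * z‖ + ‖((lam m : ℝ) : ℂ)‖ := by
          exact norm_sub_le _ _
        rw [norm_mul, Complex.norm_I, one_mul, Complex.norm_real, Real.norm_eq_abs,
          abs_of_nonneg h0m] at h1
        linarith
      have hx : ((k:ℝ)-(m:ℝ)) ≠ 0 := by
        intro h
        exact hkm (by exact_mod_cast sub_eq_zero.mp h)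
      have hx2 : (0:ℝ) < ((k:ℝ)-(m:ℝ))^2 := by positivity
      have hdk := hd k hk hkm
      have habs : ‖((Complex.I * z - (lam m:ℂ)) / ((lam k:ℂ) - (lam m:ℂ)))^2‖
          = (‖Complex.I * z - (lam m:ℂ)‖ / |lam k - lam m|)^2 := by
        rw [norm_pow, norm_div]
        congr 2
        rw [show (lam k:ℂ) - (lam m:ℂ) = ((lam k - lam m : ℝ) : ℂ) by push_cast; ring]
        exact (Complex.norm_real _).trans (Real.norm_eq_abs _)
      rw [habs]
      have hquot : ‖Complex.I * z - (lam m:ℂ)‖ / |lam k - lam m|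
          ≤ ρ / (γ^2 * ((k:ℝ)-(m:ℝ))^2) :=
        div_le_div₀ hρ0 hrρ (by positivity) hdk
      calc (‖Complex.I * z - (lam m:ℂ)‖ / |lam k - lam m|)^2
          ≤ (ρ / (γ^2 * ((k:ℝ)-(m:ℝ))^2))^2 :=
            pow_le_pow_left₀ (by positivity) hquot 2
        _ = u k := by
            rw [hu]
            simp only []
            rw [div_pow, mul_pow, ← pow_mul, ← pow_mul, mul_one_div, div_div]
    rw [Metric.uniformCauchySeqOn_iff]
    intro ε hε
    set E : ℝ := Real.exp (36/γ * Real.sqrt (lam m)) * Real.exp (36/γ * Real.sqrt (max R 0)) with hE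
    have hE0 : 0 < E := by positivity
    have hPE : ∀ K, ∀ z ∈ Metric.closedBall (0:ℂ) R, ‖P K z‖ ≤ E := by
      intro K z hz
      have hzR : ‖z‖ ≤ max R 0 := by
        have := Metric.mem_closedBall.mp hz
        rw [dist_zero_right] at this
        exact le_trans this (le_max_left _ _)
      refine (hPbound K z).trans ?_
      rw [hE]
      apply mul_le_mul_of_nonneg_left _ (Real.exp_nonneg _)
      apply Real.exp_le_exp.mpr
      apply mul_le_mul_of_nonneg_left (Real.sqrt_le_sqrt hzR) (by positivity)
    set ε' : ℝ := Real.log (1 + ε/(2*E)) with hε'def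
    have hεE : 0 < ε/(2*E) := by positivity
    have hε' : 0 < ε' := Real.log_pos (by linarith)
    have hσ : Tendsto (fun n => ∑ i ∈ Finset.range n, u i) Filter.atTop (𝓝 (∑' i, u i)) :=
      husum.hasSum.tendsto_sum_nat
    obtain ⟨N, hN⟩ := Metric.cauchySeq_iff.mp hσ.cauchySeq ε' hε'
    refine ⟨N, ?_⟩
    have key : ∀ K L, N ≤ K → N ≤ L → K ≤ L → ∀ z ∈ Metric.closedBall (0:ℂ) R,
        dist (P K z) (P L z) < ε := by
      intro K L hKN hLN hKL z hz
      have hIoc : ∀ X : ℕ, Finset.Icc 1 X = Finset.Ioc 0 X := fun X => Finset.Icc_add_one_left_eq_Ioc 0 X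
      have hdisj : Disjoint ((Finset.Ioc 0 K).erase m) ((Finset.Ioc K L).erase m) := by
        rw [Finset.disjoint_left]
        intro a ha hb
        rw [Finset.mem_erase, Finset.mem_Ioc] at ha hb
        omega
      have hPL : P L z = P K z * ∏ k ∈ (Finset.Ioc K L).erase m, f k z := by
        rw [hPdef]
        simp only
        rw [hIoc L, hIoc K,
          show Finset.Ioc 0 L = Finset.Ioc 0 K ∪ Finset.Ioc K L from
            (Finset.Ioc_union_Ioc_eq_Ioc (Nat.zero_le K) hKL).symm,
          Finset.erase_union_distrib, Finset.prod_union hdisj]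
      have hT : ∀ k ∈ (Finset.Ioc K L).erase m, 1 ≤ k ∧ k ≠ m := by
        intro k hk
        rw [Finset.mem_erase, Finset.mem_Ioc] at hk
        exact ⟨by omega, hk.1⟩
      -- tail sum bound
      have htail : ∑ k ∈ (Finset.Ioc K L).erase m,
          ‖((Complex.I * z - (lam m:ℂ)) / ((lam k:ℂ) - (lam m:ℂ)))^2‖ ≤ ε' := by
        have h1 : ∑ k ∈ (Finset.Ioc K L).erase m,
            ‖((Complex.I * z - (lam m:ℂ)) / ((lam k:ℂ) - (lam m:ℂ)))^2‖
            ≤ ∑ k ∈ (Finset.Ioc K L).erase m, u k :=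
          Finset.sum_le_sum (fun k hk => hub k (hT k hk).1 (hT k hk).2 z hz)
        have h2 : ∑ k ∈ (Finset.Ioc K L).erase m, u k ≤ ∑ k ∈ Finset.Ioc K L, u k :=
          Finset.sum_le_sum_of_subset_of_nonneg (Finset.erase_subset _ _)
            (fun k _ _ => hu0 k)
        have h3 : Finset.Ioc K L = Finset.range (L+1) \ Finset.range (K+1) := by
          ext x
          simp only [Finset.mem_Ioc, Finset.mem_sdiff, Finset.mem_range]
          omega
        have h4 : ∑ k ∈ Finset.Ioc K L, u k
            = ∑ k ∈ Finset.range (L+1), u k - ∑ k ∈ Finset.range (K+1), u k := by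
          rw [h3]
          exact Finset.sum_sdiff_eq_sub (by
            apply Finset.range_subset_range.mpr; omega)
        have h5 := hN (L+1) (by omega) (K+1) (by omega)
        rw [Real.dist_eq] at h5
        have h6 : ∑ k ∈ Finset.range (L+1), u k - ∑ k ∈ Finset.range (K+1), u k ≤ ε' := by
          calc _ ≤ |∑ k ∈ Finset.range (L+1), u k - ∑ k ∈ Finset.range (K+1), u k| := le_abs_self _
            _ ≤ ε' := h5.le
        linarith
      -- assemble
      have hQ : ‖(∏ k ∈ (Finset.Ioc K L).erase m, f k z) - 1‖ ≤ ε/(2*E) := by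
        have hg : ∀ k ∈ (Finset.Ioc K L).erase m, f k z
            = 1 + (-(((Complex.I * z - (lam m:ℂ)) / ((lam k:ℂ) - (lam m:ℂ)))^2)) := by
          intro k _
          rw [hf]; ring
        rw [Finset.prod_congr rfl hg]
        refine (aux_norm_prod_sub_one _ _).trans ?_
        have h7 : ∏ k ∈ (Finset.Ioc K L).erase m,
            (1 + ‖-(((Complex.I * z - (lam m:ℂ)) / ((lam k:ℂ) - (lam m:ℂ)))^2)‖)
            ≤ Real.exp ε' := by
          refine (aux_prod_le_exp _ _ (fun k _ => norm_nonneg _)).trans ?_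
          apply Real.exp_le_exp.mpr
          refine le_trans (le_of_eq ?_) htail
          apply Finset.sum_congr rfl
          intro k _
          rw [norm_neg]
        have h8 : Real.exp ε' = 1 + ε/(2*E) := Real.exp_log (by linarith)
        rw [h8] at h7
        linarith
      have hdist : dist (P K z) (P L z) ≤ E * (ε/(2*E)) := by
        rw [dist_eq_norm, hPL]
        have : P K z - P K z * ∏ k ∈ (Finset.Ioc K L).erase m, f k z
            = P K z * (1 - ∏ k ∈ (Finset.Ioc K L).erase m, f k z) := by ring
        rw [this, norm_mul]
        apply mul_le_mul
        · have h9 := hPE K z hz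
          exact h9
        · rw [norm_sub_rev]
          exact hQ
        · exact norm_nonneg _
        · exact hE0.le
      have : E * (ε/(2*E)) = ε/2 := by field_simp
      rw [this] at hdist
      linarith
    intro K hK L hL z hz
    rcases le_total K L with h | h
    · exact key K L hK hL h z hz
    · rw [dist_comm]
      exact key L K hL hK h z hz
  -- pointwise limit
  have hpt : ∀ z : ℂ, Tendsto (fun K => P K z) Filter.atTop
      (𝓝 (limUnder Filter.atTop (fun K => P K z))) := by
    intro z
    have hz : z ∈ Metric.closedBall (0:ℂ) ‖z‖ := by
      simp [Metric.mem_closedBall, dist_zero_right]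
    exact ((hcauchy ‖z‖).cauchySeq hz).tendsto_limUnder
  have hTLU : TendstoLocallyUniformly P
      (fun z => limUnder Filter.atTop (fun K => P K z)) Filter.atTop := by
    rw [tendstoLocallyUniformly_iff_forall_isCompact]
    intro Kc hKc
    obtain ⟨R, hR⟩ := hKc.isBounded.subset_closedBall 0
    exact ((hcauchy R).tendstoUniformlyOn_of_tendsto (fun x _ => hpt x)).mono hR
  have hdiffP : ∀ K, Differentiable ℂ (P K) := by
    intro K
    have : Differentiable ℂ (∏ k ∈ (Finset.Icc 1 K).erase m, f k ·) := by
      apply Differentiable.fun_finset_prod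
      intro k _
      rw [hf]
      apply Differentiable.const_sub
      apply Differentiable.pow
      apply Differentiable.div_const
      exact (differentiable_id.const_mul _).sub_const _
    exact this
  have hdiff : Differentiable ℂ (fun z => limUnder Filter.atTop (fun K => P K z)) := by
    have h1 := (tendstoLocallyUniformlyOn_univ.mpr hTLU).differentiableOn
      (Filter.Eventually.of_forall (fun K => (hdiffP K).differentiableOn)) isOpen_univ
    exact differentiableOn_univ.mp h1
  refine ⟨hTLU, hdiff, ?_, ?_⟩
  · -- delta values
    intro n hn
    by_cases hmn : m = n
    · subst hmn
      rw [if_pos rfl]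
      have hone : ∀ K, P K (-Complex.I * (lam m:ℂ)) = 1 := by
        intro K
        apply Finset.prod_eq_one
        intro k _
        rw [hf]
        simp only
        have h0 : Complex.I * (-Complex.I * (lam m:ℂ)) - (lam m:ℂ) = 0 := by
          linear_combination (-(lam m:ℂ)) * Complex.I_mul_I
        rw [h0]
        simp
      have h1 : Tendsto (fun K => P K (-Complex.I * (lam m:ℂ))) Filter.atTop (𝓝 1) := by
        simp only [hone]
        exact tendsto_const_nhds
      exact tendsto_nhds_unique (hpt _) h1
    · rw [if_neg hmn]
      have hnm : n ≠ m := fun h => hmn h.symm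
      have hzero : ∀ K, n ≤ K → P K (-Complex.I * (lam n:ℂ)) = 0 := by
        intro K hK
        apply Finset.prod_eq_zero (i := n)
        · rw [Finset.mem_erase, Finset.mem_Icc]
          exact ⟨hnm, hn, hK⟩
        · rw [hf]
          simp only
          have h0 : Complex.I * (-Complex.I * (lam n:ℂ)) - (lam m:ℂ)
              = (lam n:ℂ) - (lam m:ℂ) := by
            linear_combination (-(lam n:ℂ)) * Complex.I_mul_I
          rw [h0]
          have hne : (lam n:ℂ) - (lam m:ℂ) ≠ 0 := by
            intro hc
            have heq : lam n = lam m := by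
              have := sub_eq_zero.mp hc
              exact_mod_cast this
            have h2 := hd n hn hnm
            rw [heq, sub_self, abs_zero] at h2
            have hx : ((n:ℝ)-(m:ℝ)) ≠ 0 := by
              intro h
              exact hnm (by exact_mod_cast sub_eq_zero.mp h)
            nlinarith [pow_pos (abs_pos.mpr hx) 2, sq_abs ((n:ℝ)-(m:ℝ)), sq_nonneg γ, mul_pos (pow_pos hγ 2) (pow_pos (abs_pos.mpr hx) 2)]
          rw [div_self hne, one_pow, sub_self]
      have h1 : Tendsto (fun K => P K (-Complex.I * (lam n:ℂ))) Filter.atTop (𝓝 0) := by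
        apply Tendsto.congr' _ tendsto_const_nhds
        filter_upwards [Filter.eventually_ge_atTop n] with K hK
        exact (hzero K hK).symm
      exact tendsto_nhds_unique (hpt _) h1
  · -- growth bound
    intro z
    exact le_of_tendsto ((continuous_norm.tendsto _).comp (hpt z))
      (Filter.Eventually.of_forall (fun K => hPbound K z))
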